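/- Let m ≥ 1, let P be an m×m real symmetric positive definite matrix, let F be an invertible m×m real matrix, let x̂ ∈ ℝ^m, let W ≥ 0 and ε > 0. Define S = (1+ε)·F P Fᵀ + (1 + 1/ε)·(m W²/4)·I_m. Then S is symmetric positive definite, and for every x ∈ ℝ^m with (x − x̂)ᵀ P⁻¹ (x − x̂) ≤ 1 and every w ∈ ℝ^m with ‖w‖_∞ ≤ W/2, the point y = Fx + w satisfies (y − F x̂)ᵀ S⁻¹ (y − F x̂) ≤ 1. -/

import Mathlib

open Matrix

private lemma dot_shift {m : ℕ} (A : Matrix (Fin m) (Fin m) ℝ) (u v : Fin m → ℝ) :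
    u ⬝ᵥ (A *ᵥ v) = (Aᵀ *ᵥ u) ⬝ᵥ v := by
  rw [dotProduct_mulVec, mulVec_transpose]

private lemma dot_CS {m : ℕ} (a b : Fin m → ℝ) :
    a ⬝ᵥ b ≤ Real.sqrt (a ⬝ᵥ a) * Real.sqrt (b ⬝ᵥ b) := by
  simpa [dotProduct, sq] using Real.sum_mul_le_sqrt_mul_sqrt Finset.univ a b

private lemma dot_self_nonneg {m : ℕ} (a : Fin m → ℝ) : 0 ≤ a ⬝ᵥ a :=
  Finset.sum_nonneg fun i _ => mul_self_nonneg _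

private lemma posdef_smul {m : ℕ} {A : Matrix (Fin m) (Fin m) ℝ} (hA : A.PosDef)
    {r : ℝ} (hr : 0 < r) : (r • A).PosDef := by
  refine posDef_iff_dotProduct_mulVec.mpr ⟨?_, fun x hx => ?_⟩
  · have h := hA.1.eq
    show (r • A)ᴴ = r • A
    rw [conjTranspose_smul, h, star_trivial]
  · rw [smul_mulVec, dotProduct_smul, smul_eq_mul]
    exact mul_pos hr (hA.dotProduct_mulVec_pos hx)

private lemma possemidef_smul_one {m : ℕ} {r : ℝ} (hr : 0 ≤ r) :
    (r • (1 : Matrix (Fin m) (Fin m) ℝ)).PosSemidef := by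
  refine posSemidef_iff_dotProduct_mulVec.mpr ⟨?_, fun x => ?_⟩
  · show (r • (1 : Matrix (Fin m) (Fin m) ℝ))ᴴ = r • 1
    rw [conjTranspose_smul, conjTranspose_one, star_trivial]
  · rw [smul_mulVec, dotProduct_smul, one_mulVec, smul_eq_mul]
    exact mul_nonneg hr (dot_self_nonneg x)

/-- time update of the ellipsoidal filter.
With `S = (1+ε) F P Fᵀ + (1 + 1/ε)(m W²/4) I`, the matrix `S` is symmetric positive
definite, and for every `x` in the ellipsoid `E(P, x̂)` and every `w` with
`‖w‖_∞ ≤ W/2`, the point `y = Fx + w` lies in the ellipsoid `E(S, F x̂)`. -/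
theorem ellipsoid_time_update (m : ℕ) (hm : 1 ≤ m)
    (P F : Matrix (Fin m) (Fin m) ℝ) (hP : P.PosDef) (hF : IsUnit F.det)
    (xhat : Fin m → ℝ) (W ε : ℝ) (hW : 0 ≤ W) (hε : 0 < ε)
    (S : Matrix (Fin m) (Fin m) ℝ)
    (hS : S = (1 + ε) • (F * P * Fᵀ)
      + ((1 + 1 / ε) * ((m : ℝ) * W ^ 2 / 4)) • (1 : Matrix (Fin m) (Fin m) ℝ)) :
    S.PosDef ∧
      ∀ x w : Fin m → ℝ,
        (x - xhat) ⬝ᵥ (P⁻¹ *ᵥ (x - xhat)) ≤ 1 →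
        (∀ i, |w i| ≤ W / 2) →
        ((F *ᵥ x + w) - F *ᵥ xhat) ⬝ᵥ (S⁻¹ *ᵥ ((F *ᵥ x + w) - F *ᵥ xhat)) ≤ 1 := by
  have hFT : IsUnit Fᵀ.det := by simpa using hF
  have h1ε : (0:ℝ) < 1 + ε := by linarith
  have hc₂0 : (0:ℝ) ≤ (1 + 1 / ε) * ((m : ℝ) * W ^ 2 / 4) := by positivity
  -- A1 = F P Fᵀ is positive definite
  have hA1 : (F * P * Fᵀ).PosDef := by
    have hA1sd : (F * P * Fᵀ).PosSemidef := by
      simpa [conjTranspose_eq_transpose_of_trivial] using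
        hP.posSemidef.mul_mul_conjTranspose_same F
    refine PosDef.of_dotProduct_mulVec_pos hA1sd.1 (fun x hx => ?_)
    have hx' : Fᵀ *ᵥ x ≠ 0 := by
      intro h
      apply hx
      have h2 : (Fᵀ)⁻¹ *ᵥ (Fᵀ *ᵥ x) = x := by
        rw [mulVec_mulVec, nonsing_inv_mul _ hFT, one_mulVec]
      rw [h, mulVec_zero] at h2
      exact h2.symm
    have key : x ⬝ᵥ ((F * P * Fᵀ) *ᵥ x) = (Fᵀ *ᵥ x) ⬝ᵥ (P *ᵥ (Fᵀ *ᵥ x)) := by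
      rw [show (F * P * Fᵀ) *ᵥ x = F *ᵥ (P *ᵥ (Fᵀ *ᵥ x)) by
        rw [mulVec_mulVec x P Fᵀ, mulVec_mulVec x F (P * Fᵀ), mul_assoc], dot_shift]
    show (0:ℝ) < star x ⬝ᵥ ((F * P * Fᵀ) *ᵥ x)
    rw [star_trivial, key]
    simpa using hP.dotProduct_mulVec_pos hx'
  have hSpd : S.PosDef := by
    rw [hS]
    exact (posdef_smul hA1 h1ε).add_posSemidef (possemidef_smul_one hc₂0)
  refine ⟨hSpd, fun x w hx hw => ?_⟩
  have hSdet : IsUnit S.det := hSpd.det_pos.ne'.isUnit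
  set d : Fin m → ℝ := x - xhat with hd
  clear_value d
  have hzdef : (F *ᵥ x + w) - F *ᵥ xhat = F *ᵥ d + w := by
    rw [hd, mulVec_sub]; abel
  rw [hzdef]
  set z : Fin m → ℝ := F *ᵥ d + w with hzd
  clear_value z
  set c : Fin m → ℝ := S⁻¹ *ᵥ z with hc
  clear_value c
  have hzc : S *ᵥ c = z := by
    rw [hc, mulVec_mulVec, mul_nonsing_inv _ hSdet, one_mulVec]
  -- square root of P
  open scoped MatrixOrder in
  set q : Matrix (Fin m) (Fin m) ℝ := CFC.sqrt P with hq
  have hqsd : q.PosSemidef := by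
    open scoped MatrixOrder in
    exact (CFC.sqrt_nonneg P).posSemidef
  have hqq : q * q = P := by
    open scoped MatrixOrder in
    exact CFC.sqrt_mul_sqrt_self P hP.posSemidef.nonneg
  clear_value q
  have hqT : qᵀ = q := by
    have h := hqsd.1.eq
    rwa [conjTranspose_eq_transpose_of_trivial] at h
  have hqdet : IsUnit q.det := by
    have h : q.det * q.det = P.det := by rw [← det_mul, hqq]
    have hPdet : P.det ≠ 0 := hP.det_pos.ne'
    exact isUnit_iff_ne_zero.mpr (fun h0 => hPdet (by rw [← h, h0, zero_mul]))
  set s : Fin m → ℝ := q⁻¹ *ᵥ d with hsdef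
  clear_value s
  have hds : q *ᵥ s = d := by
    rw [hsdef, mulVec_mulVec, mul_nonsing_inv _ hqdet, one_mulVec]
  have hs1 : s ⬝ᵥ s ≤ 1 := by
    have hPinv : P⁻¹ = q⁻¹ * q⁻¹ := by rw [← hqq, Matrix.mul_inv_rev]
    have hqiT : (q⁻¹)ᵀ = q⁻¹ := by rw [transpose_nonsing_inv, hqT]
    have : d ⬝ᵥ (P⁻¹ *ᵥ d) = s ⬝ᵥ s := by
      rw [hPinv, show (q⁻¹ * q⁻¹) *ᵥ d = q⁻¹ *ᵥ (q⁻¹ *ᵥ d) by rw [mulVec_mulVec d q⁻¹ q⁻¹],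
        dot_shift, hqiT, ← hsdef]
    rw [← this]; exact hx
  set g : Fin m → ℝ := q *ᵥ (Fᵀ *ᵥ c) with hg
  clear_value g
  set a : ℝ := c ⬝ᵥ ((F * P * Fᵀ) *ᵥ c) with ha
  clear_value a
  set b : ℝ := ((m : ℝ) * W ^ 2 / 4) * (c ⬝ᵥ c) with hb
  clear_value b
  have hga : g ⬝ᵥ g = a := by
    rw [ha, show (F * P * Fᵀ) *ᵥ c = F *ᵥ (P *ᵥ (Fᵀ *ᵥ c)) by
      rw [mulVec_mulVec c P Fᵀ, mulVec_mulVec c F (P * Fᵀ), mul_assoc], dot_shift,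
      show P *ᵥ (Fᵀ *ᵥ c) = q *ᵥ (q *ᵥ (Fᵀ *ᵥ c)) by
        rw [mulVec_mulVec (Fᵀ *ᵥ c) q q, hqq],
      dot_shift (A := q), hqT, ← hg]
  have ha0 : 0 ≤ a := by rw [← hga]; exact dot_self_nonneg g
  have hb0 : 0 ≤ b := by
    rw [hb]; exact mul_nonneg (by positivity) (dot_self_nonneg c)
  -- bound on c ⬝ᵥ (F *ᵥ d)
  have hbound1 : c ⬝ᵥ (F *ᵥ d) ≤ Real.sqrt a := by
    have h1 : c ⬝ᵥ (F *ᵥ d) = g ⬝ᵥ s := by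
      rw [dot_shift, ← hds, dot_shift (A := q), hqT, ← hg]
    have h2 : g ⬝ᵥ s ≤ Real.sqrt (g ⬝ᵥ g) * Real.sqrt (s ⬝ᵥ s) := dot_CS g s
    have h3 : Real.sqrt (s ⬝ᵥ s) ≤ 1 := by
      rw [show (1:ℝ) = Real.sqrt 1 by rw [Real.sqrt_one]]
      exact Real.sqrt_le_sqrt hs1
    calc c ⬝ᵥ (F *ᵥ d) = g ⬝ᵥ s := h1
      _ ≤ Real.sqrt (g ⬝ᵥ g) * Real.sqrt (s ⬝ᵥ s) := h2
      _ ≤ Real.sqrt (g ⬝ᵥ g) * 1 := by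
          exact mul_le_mul_of_nonneg_left h3 (Real.sqrt_nonneg _)
      _ = Real.sqrt a := by rw [mul_one, hga]
  -- bound on c ⬝ᵥ w
  have hbound2 : c ⬝ᵥ w ≤ Real.sqrt b := by
    have hww : w ⬝ᵥ w ≤ (m : ℝ) * W ^ 2 / 4 := by
      have : ∀ i : Fin m, w i * w i ≤ W ^ 2 / 4 := by
        intro i
        have := hw i
        nlinarith [abs_nonneg (w i), sq_abs (w i), neg_abs_le (w i), le_abs_self (w i)]
      calc w ⬝ᵥ w = ∑ i, w i * w i := rfl
        _ ≤ ∑ _i : Fin m, W ^ 2 / 4 := Finset.sum_le_sum (fun i _ => this i)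
        _ = (m : ℝ) * (W ^ 2 / 4) := by simp [mul_comm]
        _ = (m : ℝ) * W ^ 2 / 4 := by ring
    calc c ⬝ᵥ w ≤ Real.sqrt (c ⬝ᵥ c) * Real.sqrt (w ⬝ᵥ w) := dot_CS c w
      _ ≤ Real.sqrt (c ⬝ᵥ c) * Real.sqrt ((m : ℝ) * W ^ 2 / 4) := by
          exact mul_le_mul_of_nonneg_left (Real.sqrt_le_sqrt hww) (Real.sqrt_nonneg _)
      _ = Real.sqrt b := by
          rw [hb, Real.sqrt_mul (by positivity), mul_comm]
  -- the quadratic form value t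
  set t : ℝ := z ⬝ᵥ c with htd
  clear_value t
  have hteq : t = (1 + ε) * a + (1 + 1 / ε) * b := by
    rw [htd, dotProduct_comm, ← hzc, hS, add_mulVec, smul_mulVec, smul_mulVec,
      dotProduct_add, dotProduct_smul, dotProduct_smul, one_mulVec, smul_eq_mul, smul_eq_mul,
      ← ha, hb]
    ring
  have htle : t ≤ Real.sqrt a + Real.sqrt b := by
    rw [htd, dotProduct_comm, hzd, dotProduct_add]
    exact add_le_add hbound1 hbound2
  -- finish with AM–GM
  show t ≤ 1
  set sa := Real.sqrt a with hsa
  set sb := Real.sqrt b with hsb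
  have hsa2 : sa ^ 2 = a := Real.sq_sqrt ha0
  have hsb2 : sb ^ 2 = b := Real.sq_sqrt hb0
  have hsa0 : 0 ≤ sa := Real.sqrt_nonneg _
  have hsb0 : 0 ≤ sb := Real.sqrt_nonneg _
  have hteq' : ε * t = (ε + ε ^ 2) * sa ^ 2 + (ε + 1) * sb ^ 2 := by
    rw [hsa2, hsb2, hteq]
    field_simp
  nlinarith [sq_nonneg ((1 + ε) * sa - 1), sq_nonneg ((1 + ε) * sb - ε),
    mul_le_mul_of_nonneg_left htle (le_of_lt (mul_pos hε h1ε)), hε.le, sq_nonneg sa, sq_nonneg sb]
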